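/- In the presented monoid QM with generators x, y, q and relations x·q = q·x, y·q = q·y, y·x = x·y·q, for all natural numbers k, l, m, k', l', m' one has (x^k · y^l · q^m) · (x^{k'} · y^{l'} · q^{m'}) = x^{k+k'} · y^{l+l'} · q^{m+m'+l·k'}. -/

import Mathlib

open FreeMonoid

/-- The defining relations of the monoid of quantum monomials
`QM = ⟨x, y, q | xq = qx, yq = qy, yx = xyq⟩`, where `x, y, q` are the generators
`of 0, of 1, of 2` of the free monoid on three letters. -/
inductive QMRel : FreeMonoid (Fin 3) → FreeMonoid (Fin 3) → Prop
  | xq : QMRel (of 0 * of 2) (of 2 * of 0)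
  | yq : QMRel (of 1 * of 2) (of 2 * of 1)
  | yx : QMRel (of 1 * of 0) (of 0 * of 1 * of 2)

/-- The congruence on the free monoid generated by the defining relations. -/
def QMcon : Con (FreeMonoid (Fin 3)) := conGen QMRel

/-- The monoid of quantum monomials, presented as the quotient of the free monoid on
three generators by the congruence generated by the relations. -/
def QM : Type := QMcon.Quotient

instance : Monoid QM := inferInstanceAs (Monoid QMcon.Quotient)

/-- The generator `x` of `QM`. -/
def QM.x : QM := QMcon.mk' (of 0)

/-- The generator `y` of `QM`. -/
def QM.y : QM := QMcon.mk' (of 1)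

/-- The generator `q` of `QM`. -/
def QM.q : QM := QMcon.mk' (of 2)


lemma QM.rel {a b : FreeMonoid (Fin 3)} (h : QMRel a b) : QMcon.mk' a = QMcon.mk' b :=
  Con.eq QMcon |>.mpr (ConGen.Rel.of _ _ h)

lemma QM.cqx : Commute QM.q QM.x := by
  have := QM.rel QMRel.xq
  simp only [map_mul] at this
  exact this.symm

lemma QM.cqy : Commute QM.q QM.y := by
  have := QM.rel QMRel.yq
  simp only [map_mul] at this
  exact this.symm

lemma QM.yx : QM.y * QM.x = QM.x * QM.y * QM.q := by
  have := QM.rel QMRel.yx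
  simp only [map_mul] at this
  exact this

lemma QM.ypow_x (l : ℕ) : QM.y ^ l * QM.x = QM.x * QM.y ^ l * QM.q ^ l := by
  induction l with
  | zero => simp
  | succ l ih =>
    rw [pow_succ, mul_assoc, QM.yx, ← mul_assoc, ← mul_assoc, ih,
      mul_assoc (QM.x * QM.y ^ l), (QM.cqy.pow_left l).eq, ← mul_assoc,
      mul_assoc QM.x, ← pow_succ, pow_succ QM.q, ← mul_assoc]

lemma QM.ypow_xpow (l k : ℕ) : QM.y ^ l * QM.x ^ k = QM.x ^ k * QM.y ^ l * QM.q ^ (l * k) := by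
  induction k with
  | zero => simp
  | succ k ih =>
    rw [pow_succ, ← mul_assoc, ih, mul_assoc, mul_assoc, (QM.cqx.pow_left (l * k)).eq,
      ← mul_assoc (QM.y ^ l), QM.ypow_x, mul_assoc (QM.x * QM.y ^ l), ← pow_add,
      Nat.mul_succ, Nat.add_comm (l * k) l]
    simp [mul_assoc]

lemma QM.qx' (n j : ℕ) (c : QM) : QM.q ^ n * (QM.x ^ j * c) = QM.x ^ j * (QM.q ^ n * c) := by
  rw [← mul_assoc, (QM.cqx.pow_pow n j).eq, mul_assoc]

lemma QM.qy' (n j : ℕ) (c : QM) : QM.q ^ n * (QM.y ^ j * c) = QM.y ^ j * (QM.q ^ n * c) := by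
  rw [← mul_assoc, (QM.cqy.pow_pow n j).eq, mul_assoc]

lemma QM.yx' (l j : ℕ) (c : QM) :
    QM.y ^ l * (QM.x ^ j * c) = QM.x ^ j * (QM.y ^ l * (QM.q ^ (l * j) * c)) := by
  rw [← mul_assoc, QM.ypow_xpow, mul_assoc, mul_assoc]

/-- Multiplication of normal forms in `QM`:
`(x^k y^l q^m) * (x^{k'} y^{l'} q^{m'}) = x^{k+k'} y^{l+l'} q^{m+m'+l·k'}`. -/
theorem QM.normal_form_mul (k l m k' l' m' : ℕ) :
    (QM.x ^ k * QM.y ^ l * QM.q ^ m) * (QM.x ^ k' * QM.y ^ l' * QM.q ^ m') =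
      QM.x ^ (k + k') * QM.y ^ (l + l') * QM.q ^ (m + m' + l * k') := by
  simp only [mul_assoc]
  rw [QM.qx' m k', QM.qy' m l', ← pow_add QM.q m m', QM.yx' l k', QM.qy' (l * k') l',
    ← pow_add QM.q (l * k'), ← mul_assoc (QM.y ^ l) (QM.y ^ l'), ← pow_add QM.y l l',
    Nat.add_comm (l * k') (m + m'), ← mul_assoc (QM.x ^ k), ← pow_add QM.x k k']
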